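/- All eigenvalues of the normalized Laplacian N = D†ᐟ² L D†ᐟ² of a k×k matrix-weighted graph lie in the interval [0, 2]. -/

import Mathlib

open Matrix

open scoped Classical in
/-- Moore–Penrose pseudoinverse of a square real matrix, via the Penrose conditions. -/
noncomputable def pinv {ι : Type*} [Fintype ι] (A : Matrix ι ι ℝ) : Matrix ι ι ℝ :=
  if h : ∃ B : Matrix ι ι ℝ,
      A * B * A = A ∧ B * A * B = B ∧ (A * B)ᵀ = A * B ∧ (B * A)ᵀ = B * A
  then h.choose else 0

open scoped Classical in
/-- Positive-semidefinite square root of a matrix (zero if the matrix is not PSD). -/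
noncomputable def psqrt {ι : Type*} [Fintype ι] [DecidableEq ι]
    (A : Matrix ι ι ℝ) : Matrix ι ι ℝ :=
  if h : A.PosSemidef then
    h.1.eigenvectorUnitary.1 * diagonal ((↑) ∘ (√·) ∘ h.1.eigenvalues) *
      (star h.1.eigenvectorUnitary : Matrix ι ι ℝ)
  else 0

lemma psqrt_facts {ι : Type*} [Fintype ι] [DecidableEq ι] (B : Matrix ι ι ℝ)
    (hB : B.PosSemidef) : (psqrt B)ᴴ = psqrt B ∧ psqrt B * psqrt B = B := by
  unfold psqrt
  rw [dif_pos hB]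
  have hU : (star hB.1.eigenvectorUnitary : Matrix ι ι ℝ) * hB.1.eigenvectorUnitary.1 = 1 :=
    hB.1.eigenvectorUnitary.2.1
  constructor
  · simp [conjTranspose_mul, Matrix.star_eq_conjTranspose, mul_assoc]
  · have hd : diagonal (((↑) ∘ (√·) ∘ hB.1.eigenvalues) : ι → ℝ) *
        diagonal ((↑) ∘ (√·) ∘ hB.1.eigenvalues) = diagonal (RCLike.ofReal ∘ hB.1.eigenvalues) := by
      rw [diagonal_mul_diagonal]
      congr 1
      funext i
      simp [Real.mul_self_sqrt (hB.eigenvalues_nonneg i)]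
    conv_rhs => rw [hB.1.spectral_theorem, Unitary.conjStarAlgAut_apply]
    rw [← hd]
    simp only [mul_assoc]
    rw [← mul_assoc (star _ : Matrix ι ι ℝ) _ _, hU, one_mul]

/-- Uniqueness of the Moore–Penrose pseudoinverse. -/
lemma penrose_unique {ι : Type*} [Fintype ι] (A B C : Matrix ι ι ℝ)
    (hB1 : A * B * A = A) (hB2 : B * A * B = B) (hB3 : (A * B)ᵀ = A * B)
    (hB4 : (B * A)ᵀ = B * A)
    (hC1 : A * C * A = A) (hC2 : C * A * C = C) (hC3 : (A * C)ᵀ = A * C)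
    (hC4 : (C * A)ᵀ = C * A) : B = C := by
  have e1 : (A * C) * (A * B) = A * B := by rw [← mul_assoc, hC1]
  have hAB : A * B = A * C := by
    have h : A * B = (A * B) * (A * C) := by
      calc A * B = ((A * C) * (A * B))ᵀ := by rw [e1, hB3]
        _ = (A * B)ᵀ * (A * C)ᵀ := by rw [transpose_mul]
        _ = (A * B) * (A * C) := by rw [hB3, hC3]
    calc A * B = (A * B) * (A * C) := h
      _ = ((A * B) * A) * C := by rw [mul_assoc (A * B) A C]
      _ = A * C := by rw [hB1]
  have e2 : (C * A) * (B * A) = C * A := by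
    rw [← mul_assoc, mul_assoc C A B, mul_assoc C (A * B) A, hB1]
  have hBA : C * A = B * A := by
    calc C * A = ((C * A) * (B * A))ᵀ := by rw [e2, hC4]
      _ = (B * A)ᵀ * (C * A)ᵀ := by rw [transpose_mul]
      _ = (B * A) * (C * A) := by rw [hB4, hC4]
      _ = B * (A * (C * A)) := by rw [mul_assoc]
      _ = B * ((A * C) * A) := by rw [← mul_assoc A C A]
      _ = B * A := by rw [hC1]
  calc B = (B * A) * B := hB2.symm
    _ = (C * A) * B := by rw [hBA]
    _ = C * (A * B) := by rw [mul_assoc]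
    _ = C * (A * C) := by rw [hAB]
    _ = (C * A) * C := by rw [← mul_assoc]
    _ = C := hC2

lemma psd_vecMulVec {ι : Type*} [Fintype ι] (a : ι → ℝ) : (vecMulVec a a).PosSemidef := by
  refine Matrix.PosSemidef.of_dotProduct_mulVec_nonneg ?_ ?_
  · show _ᴴ = _
    ext i j
    simp [conjTranspose_apply, vecMulVec_apply, mul_comm]
  · intro x
    have hmv : (vecMulVec a a) *ᵥ x = (a ⬝ᵥ x) • a := by
      ext i
      simp only [mulVec, vecMulVec_apply, dotProduct, Pi.smul_apply, smul_eq_mul,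
        Finset.sum_mul]
      exact Finset.sum_congr rfl fun j _ => by ring
    have hst : star x = x := by funext i; exact star_trivial _
    rw [hmv, hst, dotProduct_smul, smul_eq_mul, dotProduct_comm]
    exact mul_self_nonneg _

lemma psd_sum {ι κ : Type*} [Fintype ι] (s : Finset κ) (f : κ → Matrix ι ι ℝ)
    (h : ∀ e ∈ s, (f e).PosSemidef) : (∑ e ∈ s, f e).PosSemidef :=
  Finset.sum_induction f _ (fun _ _ ha hb => ha.add hb) Matrix.PosSemidef.zero h

lemma psd_smul {ι : Type*} [Fintype ι] {A : Matrix ι ι ℝ} (c : ℝ) (hc : 0 ≤ c)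
    (hA : A.PosSemidef) : (c • A).PosSemidef := by
  refine Matrix.PosSemidef.of_dotProduct_mulVec_nonneg ?_ ?_
  · show (c • A)ᴴ = c • A
    rw [conjTranspose_smul, star_trivial, hA.1.eq]
  · intro x
    rw [smul_mulVec, dotProduct_smul, smul_eq_mul]
    exact mul_nonneg hc (hA.dotProduct_mulVec_nonneg x)

lemma psd_of_symm_idem {ι : Type*} [Fintype ι] [DecidableEq ι] (Q : Matrix ι ι ℝ)
    (h1 : Qᵀ = Q) (h2 : Q * Q = Q) : Q.PosSemidef := by
  refine Matrix.PosSemidef.of_dotProduct_mulVec_nonneg ?_ ?_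
  · show Qᴴ = Q
    rw [conjTranspose_eq_transpose_of_trivial, h1]
  · intro x
    have hst : star x = x := by funext i; exact star_trivial _
    have hvm : x ᵥ* Q = Q *ᵥ x := by conv_lhs => rw [← h1, vecMul_transpose]
    rw [hst, ← h2, ← mulVec_mulVec, dotProduct_mulVec, hvm]
    exact Finset.sum_nonneg fun i _ => mul_self_nonneg _

set_option maxHeartbeats 1600000 in
/-- All (real) eigenvalues of the normalized Laplacian `N = D†ᐟ² L D†ᐟ²` of a
`k×k` matrix-weighted graph lie in `[0, 2]`. -/
theorem stmt4 {n k : ℕ} (E : Finset (Fin n × Fin n))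
    (hE : ∀ e ∈ E, e.1 ≠ e.2)
    (φ : Fin n × Fin n → (Fin k → ℝ))
    (b : Fin n × Fin n → (Fin n × Fin k → ℝ))
    (hb : ∀ e, b e = fun p =>
      (if p.1 = e.1 then φ e p.2 else 0) - (if p.1 = e.2 then φ e p.2 else 0))
    (D : Matrix (Fin n × Fin k) (Fin n × Fin k) ℝ)
    (hD : D = Matrix.of fun p q => if p.1 = q.1 then
        ∑ e ∈ E, (if e.1 = p.1 ∨ e.2 = p.1 then φ e p.2 * φ e q.2 else 0) else 0)
    (L : Matrix (Fin n × Fin k) (Fin n × Fin k) ℝ)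
    (hL : L = ∑ e ∈ E, vecMulVec (b e) (b e))
    (N : Matrix (Fin n × Fin k) (Fin n × Fin k) ℝ)
    (hN : N = psqrt (pinv D) * L * psqrt (pinv D))
    (μ : ℝ) (v : Fin n × Fin k → ℝ) (hv : v ≠ 0) (hev : N.mulVec v = μ • v) :
    0 ≤ μ ∧ μ ≤ 2 := by
  classical
  set c : Fin n × Fin n → (Fin n × Fin k → ℝ) := fun e p =>
    (if p.1 = e.1 then φ e p.2 else 0) + (if p.1 = e.2 then φ e p.2 else 0) with hc
  set Cm : Matrix (Fin n × Fin k) (Fin n × Fin k) ℝ :=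
    ∑ e ∈ E, vecMulVec (c e) (c e) with hCm
  have hLpsd : L.PosSemidef := by
    rw [hL]; exact psd_sum _ _ fun e _ => psd_vecMulVec _
  have hCpsd : Cm.PosSemidef := psd_sum _ _ fun e _ => psd_vecMulVec _
  -- key combinatorial identity : L + Cm = 2 • D
  have key : L + Cm = (2:ℝ) • D := by
    rw [hL, hCm, hD]
    ext p q
    simp only [Matrix.add_apply, Matrix.sum_apply, vecMulVec_apply, Matrix.smul_apply,
      Matrix.of_apply, smul_eq_mul]
    rw [← Finset.sum_add_distrib]
    by_cases hpq : p.1 = q.1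
    · rw [if_pos hpq, Finset.mul_sum]
      refine Finset.sum_congr rfl fun e he => ?_
      have hne := hE e he
      simp only [hb, hc, hpq]
      by_cases h1 : q.1 = e.1
      · by_cases h2 : q.1 = e.2
        · exact absurd (h1.symm.trans h2) hne
        · simp only [if_pos h1, if_neg h2, if_pos (Or.inl h1.symm)]
          ring
      · by_cases h2 : q.1 = e.2
        · simp only [if_neg h1, if_pos h2, if_pos (Or.inr h2.symm)]
          ring
        · have hor : ¬(e.1 = q.1 ∨ e.2 = q.1) := by
            rintro (h | h)
            exacts [h1 h.symm, h2 h.symm]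
          simp only [if_neg h1, if_neg h2, if_neg hor]
          ring
    · rw [if_neg hpq, mul_zero]
      refine Finset.sum_eq_zero fun e he => ?_
      have hne := hE e he
      simp only [hb, hc]
      by_cases hp1 : p.1 = e.1
      · have hq1 : ¬ q.1 = e.1 := fun h => hpq (hp1.trans h.symm)
        have hp2 : ¬ p.1 = e.2 := fun h => hne (hp1.symm.trans h)
        simp only [if_pos hp1, if_neg hq1, if_neg hp2]
        ring
      · by_cases hp2 : p.1 = e.2
        · have hq2 : ¬ q.1 = e.2 := fun h => hpq (hp2.trans h.symm)
          simp only [if_neg hp1, if_pos hp2, if_neg hq2]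
          ring
        · simp only [if_neg hp1, if_neg hp2]
          ring
  have hDval : D = (2⁻¹ : ℝ) • (L + Cm) := by
    rw [key, smul_smul]; norm_num
  have hDpsd : D.PosSemidef := by
    rw [hDval]; exact psd_smul _ (by norm_num) (hLpsd.add hCpsd)
  have hDsym : Dᵀ = D := by
    rw [← conjTranspose_eq_transpose_of_trivial]; exact hDpsd.1
  by_cases hex : ∃ B : Matrix (Fin n × Fin k) (Fin n × Fin k) ℝ,
      D * B * D = D ∧ B * D * B = B ∧ (D * B)ᵀ = D * B ∧ (B * D)ᵀ = B * D
  · -- pseudoinverse exists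
    have hspec := hex.choose_spec
    set B := hex.choose with hBdef
    obtain ⟨hP1, hP2, hP3, hP4⟩ := hspec
    have hpinv : pinv D = B := by unfold pinv; rw [dif_pos hex, hBdef]
    have hBsym : Bᵀ = B := by
      refine penrose_unique D Bᵀ B ?_ ?_ ?_ ?_ hP1 hP2 hP3 hP4
      · have t1 := congrArg Matrix.transpose hP1
        simp only [transpose_mul, hDsym, ← mul_assoc] at t1
        exact t1
      · have t2 := congrArg Matrix.transpose hP2
        simp only [transpose_mul, hDsym, ← mul_assoc] at t2
        exact t2
      · have h : D * Bᵀ = (B * D)ᵀ := by rw [transpose_mul, hDsym]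
        rw [h, transpose_transpose, hP4]
      · have h : Bᵀ * D = (D * B)ᵀ := by rw [transpose_mul, hDsym]
        rw [h, transpose_transpose, hP3]
    have hBpsd : B.PosSemidef := by
      have h := hDpsd.mul_mul_conjTranspose_same B
      rwa [conjTranspose_eq_transpose_of_trivial, hBsym, hP2] at h
    have hpsq2 : psqrt (pinv D) = psqrt B := by
      rw [hpinv]
    set M := psqrt B with hM
    have hMpsd := psqrt_facts B hBpsd
    have hMH : Mᴴ = M := hMpsd.1
    have hMsym : Mᵀ = M := by rw [← conjTranspose_eq_transpose_of_trivial]; exact hMH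
    have hMM : M * M = B := hMpsd.2
    have hNM : N = M * L * M := by rw [hN, hpsq2]
    have hNpsd : N.PosSemidef := by
      have h := hLpsd.mul_mul_conjTranspose_same M
      rwa [hMH, ← hNM] at h
    set P := M * D * M with hP
    have hPP : P * P = P := by
      rw [hP]
      simp only [mul_assoc]
      rw [← mul_assoc M M (D * M), hMM, ← mul_assoc D B (D * M), ← mul_assoc (D * B) D M, hP1]
    have hPsym : Pᵀ = P := by
      rw [hP, transpose_mul, transpose_mul, hMsym, hDsym, ← mul_assoc]
    have hQpsd : ((1 : Matrix (Fin n × Fin k) (Fin n × Fin k) ℝ) - P).PosSemidef := by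
      apply psd_of_symm_idem
      · rw [transpose_sub, transpose_one, hPsym]
      · rw [sub_mul, one_mul, mul_sub, mul_one, hPP]
        abel
    have hSpsd : (M * Cm * M).PosSemidef := by
      have h := hCpsd.mul_mul_conjTranspose_same M
      rwa [hMH] at h
    have hSval : M * Cm * M = (2:ℝ) • P - N := by
      have hCval : Cm = (2:ℝ) • D - L := by
        rw [eq_sub_iff_add_eq, add_comm]; exact key
      rw [hCval, hNM, hP]
      simp only [Matrix.mul_smul, Matrix.smul_mul, mul_sub, sub_mul]
    have hstar : star v = v := by funext i; exact star_trivial _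
    have hq1 : 0 ≤ v ⬝ᵥ N *ᵥ v := by have h := hNpsd.dotProduct_mulVec_nonneg v; rwa [hstar] at h
    have hq2 : 0 ≤ v ⬝ᵥ ((1 : Matrix (Fin n × Fin k) (Fin n × Fin k) ℝ) - P) *ᵥ v := by
      have h := hQpsd.dotProduct_mulVec_nonneg v; rwa [hstar] at h
    have hq3 : 0 ≤ v ⬝ᵥ ((2:ℝ) • P - N) *ᵥ v := by
      have h := hSpsd.dotProduct_mulVec_nonneg v; rwa [hstar, hSval] at h
    have hvv : 0 < v ⬝ᵥ v := by
      have h0 : 0 ≤ v ⬝ᵥ v := Finset.sum_nonneg fun i _ => mul_self_nonneg _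
      rcases h0.lt_or_eq with h | h
      · exact h
      · exact absurd (dotProduct_self_eq_zero.mp h.symm) hv
    have hNvv : v ⬝ᵥ N *ᵥ v = μ * (v ⬝ᵥ v) := by rw [hev, dotProduct_smul, smul_eq_mul]
    have hPvv : v ⬝ᵥ P *ᵥ v ≤ v ⬝ᵥ v := by
      rw [sub_mulVec, one_mulVec, dotProduct_sub] at hq2
      linarith
    rw [sub_mulVec, dotProduct_sub, smul_mulVec, dotProduct_smul, smul_eq_mul, hNvv] at hq3
    rw [hNvv] at hq1
    constructor
    · nlinarith [hq1, hvv]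
    · nlinarith [hq3, hPvv, hvv]
  · -- degenerate case : no pseudoinverse, pinv D = 0
    have hpinv : pinv D = 0 := by unfold pinv; rw [dif_neg hex]
    have hpsq0 : psqrt (0 : Matrix (Fin n × Fin k) (Fin n × Fin k) ℝ) = 0 := by
      have h0 := psqrt_facts (0 : Matrix (Fin n × Fin k) (Fin n × Fin k) ℝ) Matrix.PosSemidef.zero
      rw [← conjTranspose_mul_self_eq_zero, h0.1, h0.2]
    have hN0 : N = 0 := by rw [hN, hpinv, hpsq0]; simp
    rw [hN0, zero_mulVec] at hev
    rcases smul_eq_zero.mp hev.symm with hμ | hv0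
    · rw [hμ]; norm_num
    · exact absurd hv0 hv
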